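/- Let K be a field and let D be a free module of rank 2 over a commutative ring O, with a submodule filtration and a linear map structure as follows: D has basis x, y; define f₀ : D → D by f₀x = αx + βy, f₀y = γx + δy with α,β,γ,δ ∈ O. Consider the rank-one submodule D⁰ = O·(x ⊗ x ⊗ w) inside D ⊗ D ⊗ O·w, with the map F(x⊗x⊗w) = u·ℓ^{−k}·(αx+βy)⊗(αx+βy)⊗w formally scaled into O (assuming ℓ^k divides the relevant products). Then the kernel of (1 − F) on D⁰/λD⁰ is nonzero only if u·α² ≡ ℓ^k (mod λ^{ek+1}) and αβ ≡ 0 (mod λ^{ek+1}), where e is the ramification index. -/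

import Mathlib

/-- The Frobenius computation of Proposition 4.2: with `F` acting on the rank-one piece
`D⁰ = O·(x⊗x⊗w)` by `F(x⊗x⊗w) = u·ℓ^{−k}·(αx+βy)⊗(αx+βy)⊗w`, i.e. with coordinates
`A, B, C` satisfying `ℓ^k·A = u·α²`, `ℓ^k·B = u·α·β`, `ℓ^k·C = u·β²`, a nonzero element of
`ker(1 − F)` on `D⁰/λD⁰` forces `u·α² ≡ ℓ^k (mod λ^{ek+1})` and `α·β ≡ 0 (mod λ^{ek+1})`. -/
theorem stmt_15 {O : Type*} [CommRing O] [IsDomain O] [IsDiscreteValuationRing O]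
    (lam : O) (hlam : Irreducible lam) (e : ℕ) (he : 1 ≤ e) (k : ℕ) (hk : 2 ≤ k)
    (ℓ vℓ : O) (hvℓ : IsUnit vℓ) (hℓ : ℓ = vℓ * lam ^ e)
    (u α β : O) (hu : IsUnit u)
    (A B C : O)
    (hA : ℓ ^ k * A = u * α ^ 2) (hB : ℓ ^ k * B = u * (α * β)) (hC : ℓ ^ k * C = u * β ^ 2)
    (c : O) (hc : ¬ lam ∣ c)
    (hker1 : lam ∣ c - c * A) (hker2 : lam ∣ c * B) (hker3 : lam ∣ c * C) :
    lam ^ (e * k + 1) ∣ u * α ^ 2 - ℓ ^ k ∧ lam ^ (e * k + 1) ∣ α * β := by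
  have hprime := hlam.prime
  have h1 : lam ∣ 1 - A := by
    have : lam ∣ c * (1 - A) := by rwa [mul_sub, mul_one]
    exact (hprime.dvd_mul.mp this).resolve_left hc
  have hBdvd : lam ∣ B := (hprime.dvd_mul.mp hker2).resolve_left hc
  have hℓk : ℓ ^ k = vℓ ^ k * lam ^ (e * k) := by
    rw [hℓ, mul_pow, ← pow_mul]
  constructor
  · obtain ⟨t, ht⟩ := h1
    have heq : u * α ^ 2 - ℓ ^ k = lam ^ (e * k + 1) * (vℓ ^ k * (-t)) := by
      rw [hℓk] at hA ⊢
      rw [pow_succ]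
      linear_combination -hA - vℓ ^ k * lam ^ (e * k) * ht
    exact ⟨_, heq⟩
  · obtain ⟨t, ht⟩ := hBdvd
    have : u * (α * β) = lam ^ (e * k + 1) * (vℓ ^ k * t) := by
      rw [← hB, hℓk, ht, pow_succ]; ring
    have hdvd : lam ^ (e * k + 1) ∣ u * (α * β) := ⟨vℓ ^ k * t, this⟩
    exact hu.dvd_mul_left.mp hdvd
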